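/- Let n ≥ 2, p ∈ [0,1], k ∈ ℝ, and let (b_i, Z_i), i = 1,…,n, be i.i.d. pairs of independent random variables with b_i ~ Bernoulli(p) and Z_i ~ N(0,1). Set X_i = b_i · 1{Z_i ≥ k} · Z_i and X̄ = (1/n) Σ_{i=1}^n X_i. Then P(|X̄ − p·φ(k)| ≤ √(2/n) · log n) ≥ 1 − 4/n, where φ(k) = (1/√(2π)) exp(−k²/2) is the standard normal density at k. -/

import Mathlib

open MeasureTheory ProbabilityTheory
open scoped ENNReal

noncomputable section

/-- The standard normal probability density function. -/
def stdphi (t : ℝ) : ℝ := (Real.sqrt (2 * Real.pi))⁻¹ * Real.exp (-(t ^ 2) / 2)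

namespace BTGC
open Real Set
open scoped NNReal


def T : ℝ := Real.sqrt 2 * (10 / 27)

lemma T_sq : T ^ 2 = 200 / 729 := by
  have h : Real.sqrt 2 ^ 2 = 2 := Real.sq_sqrt (by norm_num)
  rw [T, mul_pow, h]; norm_num

lemma T_pos : 0 < T := by
  have h := Real.sqrt_pos.mpr (show (0:ℝ) < 2 by norm_num)
  rw [T]; positivity

private lemma mono_from_zero {G G' : ℝ → ℝ} (hd : ∀ x, HasDerivAt G (G' x) x)
    (h' : ∀ x, 0 ≤ x → 0 ≤ G' x) {x : ℝ} (hx : 0 ≤ x) : G 0 ≤ G x := by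
  have hmono : MonotoneOn G (Ici 0) := by
    refine monotoneOn_of_deriv_nonneg (convex_Ici 0)
      (Continuous.continuousOn ?_) (fun y _ => (hd y).differentiableAt.differentiableWithinAt)
      (fun y hy => ?_)
    · exact Differentiable.continuous (fun y => (hd y).differentiableAt)
    · rw [(hd y).deriv]
      exact h' y (le_of_lt (by simpa using hy))
  exact hmono self_mem_Ici hx hx

lemma exp_quad (x : ℝ) : Real.exp x ≤ 1 + x + x ^ 2 / 2 * Real.exp |x| := by
  rcases le_or_gt 0 x with hx | hx
  · rw [abs_of_nonneg hx]
    -- G(u) = u^2/2 - 1 + exp(-u) + u * exp(-u) ≥ 0 for u ≥ 0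
    have key : ∀ u : ℝ, 0 ≤ u → 0 ≤ u ^ 2 / 2 - 1 + Real.exp (-u) + u * Real.exp (-u) := by
      intro u hu
      have hd : ∀ y : ℝ, HasDerivAt (fun z : ℝ => z ^ 2 / 2 - 1 + Real.exp (-z) + z * Real.exp (-z))
          (y - y * Real.exp (-y)) y := by
        intro y
        have h1 : HasDerivAt (fun z : ℝ => z ^ 2 / 2) y y := by
          simpa using (hasDerivAt_pow 2 y).div_const 2
        have h2 : HasDerivAt (fun z : ℝ => Real.exp (-z)) (-Real.exp (-y)) y := by
          simpa using ((hasDerivAt_id y).neg.exp)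
        have h3 : HasDerivAt (fun z : ℝ => z * Real.exp (-z))
            (1 * Real.exp (-y) + y * -Real.exp (-y)) y := (hasDerivAt_id y).mul h2
        have := ((h1.sub_const 1).add h2).add h3
        exact this.congr_deriv (by ring)
      have := mono_from_zero hd (fun y hy => by
        have h1 : Real.exp (-y) ≤ 1 := Real.exp_le_one_iff.mpr (by linarith)
        nlinarith) hu
      simpa using this
    have h := key x hx
    have hepos : (0:ℝ) < Real.exp x := Real.exp_pos x
    have hmul := mul_le_mul_of_nonneg_left (by linarith : 1 - Real.exp (-x) - x * Real.exp (-x) ≤ x ^ 2 / 2) (le_of_lt hepos)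
    have hxx : Real.exp x * (x * Real.exp (-x)) = x := by
      rw [mul_comm x, ← mul_assoc, ← Real.exp_add]; simp
    rw [mul_sub, mul_sub, ← Real.exp_add] at hmul
    simp only [add_neg_cancel, Real.exp_zero] at hmul
    rw [hxx] at hmul
    linarith
  · -- x < 0 : exp x ≤ 1 + x + x^2/2
    have key : ∀ u : ℝ, 0 ≤ u → 0 ≤ u ^ 2 / 2 + 1 - u - Real.exp (-u) := by
      intro u hu
      have hd : ∀ y : ℝ, HasDerivAt (fun z : ℝ => z ^ 2 / 2 + 1 - z - Real.exp (-z))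
          (y - 1 + Real.exp (-y)) y := by
        intro y
        have h1 : HasDerivAt (fun z : ℝ => z ^ 2 / 2) y y := by
          simpa using (hasDerivAt_pow 2 y).div_const 2
        have h2 : HasDerivAt (fun z : ℝ => Real.exp (-z)) (-Real.exp (-y)) y := by
          simpa using ((hasDerivAt_id y).neg.exp)
        have := ((h1.add_const 1).sub (hasDerivAt_id y)).sub h2
        exact this.congr_deriv (by ring)
      have := mono_from_zero hd (fun y hy => by
        have := Real.add_one_le_exp (-y)
        linarith) hu
      simpa using this
    have h := key (-x) (by linarith)
    have h1 : (1:ℝ) ≤ Real.exp |x| := Real.one_le_exp (abs_nonneg x)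
    have h2 : Real.exp x ≤ 1 + x + x ^ 2 / 2 := by
      have h3 : Real.exp (-(-x)) ≤ (-x) ^ 2 / 2 + 1 - (-x) := by linarith
      simp only [neg_neg] at h3
      nlinarith [h3]
    nlinarith [sq_nonneg x, Real.exp_pos x]



lemma exp_num : Real.exp (400/729) ≤ 1.7316 := by
  have hb := Real.exp_bound' (by norm_num : (0:ℝ) ≤ 400/729) (by norm_num)
    (by norm_num : 0 < 4)
  refine hb.trans ?_
  norm_num [Finset.sum_range_succ, Nat.factorial]

lemma sqrt3_ge : (1.73 : ℝ) ≤ Real.sqrt 3 := by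
  nlinarith [Real.sq_sqrt (show (0:ℝ) ≤ 3 by norm_num), Real.sqrt_nonneg 3]

lemma pdf_eq (x : ℝ) : gaussianPDFReal 0 1 x
    = (Real.sqrt (2*π))⁻¹ * Real.exp (-x^2/2) := by
  simp [gaussianPDFReal]

def C : ℝ := (Real.sqrt (2*π))⁻¹ * Real.exp (400/729)

lemma ptwise (x : ℝ) : gaussianPDFReal 0 1 x * (x^2 * Real.exp (T * |x|))
    ≤ C * (x^2 * Real.exp (-(3/8) * x^2)) := by
  rw [pdf_eq, C]
  have h1 : T * |x| ≤ 400/729 + x^2/8 := by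
    have h := sq_nonneg (|x| - 4*T)
    have h2 := T_sq
    nlinarith [sq_abs x]
  have h2 : Real.exp (-x^2/2) * Real.exp (T*|x|)
      ≤ Real.exp (400/729) * Real.exp (-(3/8)*x^2) := by
    rw [← Real.exp_add, ← Real.exp_add]
    apply Real.exp_le_exp.mpr; linarith
  calc (Real.sqrt (2*π))⁻¹ * Real.exp (-x^2/2) * (x^2 * Real.exp (T * |x|))
      = ((Real.sqrt (2*π))⁻¹ * x^2) * (Real.exp (-x^2/2) * Real.exp (T*|x|)) := by ring
    _ ≤ ((Real.sqrt (2*π))⁻¹ * x^2) * (Real.exp (400/729) * Real.exp (-(3/8)*x^2)) := by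
        apply mul_le_mul_of_nonneg_left h2 (by positivity)
    _ = (Real.sqrt (2*π))⁻¹ * Real.exp (400/729) * (x^2 * Real.exp (-(3/8) * x^2)) := by ring

lemma maj_integrable : Integrable (fun x : ℝ => x^2 * Real.exp (-(3/8) * x^2)) := by
  have h := integrable_rpow_mul_exp_neg_mul_sq (by norm_num : (0:ℝ) < 3/8)
    (by norm_num : (-1:ℝ) < 2)
  have he : (fun x : ℝ => x ^ (2:ℝ) * Real.exp (-(3/8) * x^2))
      = fun x : ℝ => x^2 * Real.exp (-(3/8) * x^2) := by
    funext x
    rw [show ((2:ℝ)) = ((2:ℕ):ℝ) by norm_num, Real.rpow_natCast]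
  rwa [he] at h

lemma Gamma_three_half : Real.Gamma (3/2) = Real.sqrt π / 2 := by
  rw [show (3/2:ℝ) = 1/2 + 1 by norm_num, Real.Gamma_add_one (by norm_num),
    Real.Gamma_one_half_eq]
  ring

lemma maj_integral : ∫ x : ℝ, x^2 * Real.exp (-(3/8) * x^2)
    = 2 * ((3/8:ℝ) ^ (-(3:ℝ)/2) * (1/2) * Real.Gamma (3/2)) := by
  have habs := integral_comp_abs (f := fun u : ℝ => u^2 * Real.exp (-(3/8)*u^2))
  simp only [sq_abs] at habs
  rw [habs]
  congr 1
  have h2 := integral_rpow_mul_exp_neg_mul_rpow (p:=2) (q:=2) (b:=3/8)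
    (by norm_num) (by norm_num) (by norm_num)
  have hcong : ∫ x in Ioi (0:ℝ), x ^ (2:ℝ) * Real.exp (-(3/8) * x ^ (2:ℝ))
      = ∫ x in Ioi (0:ℝ), x^2 * Real.exp (-(3/8) * x^2) := by
    refine setIntegral_congr_fun measurableSet_Ioi (fun x hx => ?_)
    rw [show ((2:ℝ)) = ((2:ℕ):ℝ) by norm_num, Real.rpow_natCast]
  rw [← hcong, h2]
  norm_num

lemma gauss_moment : ∫ x : ℝ, gaussianPDFReal 0 1 x * (x^2 * Real.exp (T * |x|))
    ≤ 27/10 := by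
  have hle := integral_mono_of_nonneg
    (ae_of_all _ (fun x => mul_nonneg (gaussianPDFReal_nonneg 0 1 x) (by positivity) :
      ∀ x : ℝ, 0 ≤ gaussianPDFReal 0 1 x * (x^2 * Real.exp (T * |x|))))
    (maj_integrable.const_mul C)
    (ae_of_all _ ptwise)
  refine hle.trans ?_
  rw [integral_const_mul, maj_integral, Gamma_three_half, C]
  -- now pure arithmetic with sqrt's
  have h38 : (3/8:ℝ) ^ (-(3:ℝ)/2) = (Real.sqrt (3/8) ^ (3:ℕ))⁻¹ := by
    rw [show (-(3:ℝ)/2) = (1/2) * ((-3:ℤ):ℝ) by norm_num,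
      Real.rpow_mul (by norm_num), ← Real.sqrt_eq_rpow, Real.rpow_intCast, zpow_neg]
    norm_cast
  rw [h38]
  have hs2 : Real.sqrt 2 ^ 2 = 2 := Real.sq_sqrt (by norm_num)
  have hs3 : Real.sqrt 3 ^ 2 = 3 := Real.sq_sqrt (by norm_num)
  have h2pi : Real.sqrt (2*π) = Real.sqrt 2 * Real.sqrt π :=
    Real.sqrt_mul (by norm_num) π
  have h8 : Real.sqrt 8 = 2 * Real.sqrt 2 := by
    rw [show (8:ℝ) = 2^2*2 by norm_num, Real.sqrt_mul (by positivity), Real.sqrt_sq (by norm_num)]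
  have hs38 : Real.sqrt (3/8) = Real.sqrt 3 / (2 * Real.sqrt 2) := by
    rw [Real.sqrt_div (by norm_num : (0:ℝ) ≤ 3) 8, h8]
  have h2pos : (0:ℝ) < Real.sqrt 2 := Real.sqrt_pos.mpr (by norm_num)
  have h3pos : (0:ℝ) < Real.sqrt 3 := Real.sqrt_pos.mpr (by norm_num)
  have hpipos : (0:ℝ) < Real.sqrt π := Real.sqrt_pos.mpr Real.pi_pos
  have key : Real.exp (400/729) * 80 ≤ 81 * Real.sqrt 3 := by
    nlinarith [exp_num, sqrt3_ge, Real.exp_pos (400/729)]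
  rw [h2pi, hs38, div_pow]
  have e1 : Real.sqrt 3 ^ 3 = 3 * Real.sqrt 3 := by
    rw [show Real.sqrt 3 ^ 3 = Real.sqrt 3 ^ 2 * Real.sqrt 3 by ring, hs3]
  have e2 : (2 * Real.sqrt 2) ^ 3 = 16 * Real.sqrt 2 := by
    rw [mul_pow, show Real.sqrt 2 ^ 3 = Real.sqrt 2 ^ 2 * Real.sqrt 2 by ring, hs2]
    ring
  rw [e1, e2]
  have lhs_eq : (Real.sqrt 2 * Real.sqrt π)⁻¹ * Real.exp (400/729) *
      (2 * ((3 * Real.sqrt 3 / (16 * Real.sqrt 2))⁻¹ * (1/2) * (Real.sqrt π / 2)))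
      = Real.exp (400/729) * 8 / (3 * Real.sqrt 3) := by
    field_simp
    ring
  rw [lhs_eq, div_le_iff₀ (by positivity)]
  nlinarith [key]



/-- transfer of integrals to Lebesgue -/
lemma integral_gaussianReal (g : ℝ → ℝ) :
    ∫ x, g x ∂(gaussianReal 0 1) = ∫ x, gaussianPDFReal 0 1 x * g x := by
  rw [gaussianReal_of_var_ne_zero 0 one_ne_zero, gaussianPDF_def]
  have : (fun x => ENNReal.ofReal (gaussianPDFReal 0 1 x))
      = fun x => ((gaussianPDFReal 0 1 x).toNNReal : ℝ≥0∞) := rfl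
  rw [this, integral_withDensity_eq_integral_smul
    ((measurable_gaussianPDFReal 0 1).real_toNNReal) g]
  congr 1
  funext x
  rw [NNReal.smul_def, Real.coe_toNNReal _ (gaussianPDFReal_nonneg 0 1 x)]
  rfl

lemma integrable_gaussianReal_iff (g : ℝ → ℝ) :
    Integrable g (gaussianReal 0 1) ↔
      Integrable (fun x => gaussianPDFReal 0 1 x * g x) volume := by
  rw [gaussianReal_of_var_ne_zero 0 one_ne_zero, gaussianPDF_def]
  have h : (fun x => ENNReal.ofReal (gaussianPDFReal 0 1 x))
      = fun x => ((gaussianPDFReal 0 1 x).toNNReal : ℝ≥0∞) := rfl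
  rw [h, integrable_withDensity_iff_integrable_smul
    ((measurable_gaussianPDFReal 0 1).real_toNNReal)]
  constructor <;> intro h2 <;>
  · refine h2.congr (ae_of_all _ fun x => ?_)
    simp only [NNReal.smul_def, Real.coe_toNNReal _ (gaussianPDFReal_nonneg 0 1 x),
      smul_eq_mul]

lemma integral_bernoulli_ite {p : ℝ} (hp0 : 0 ≤ p) (h : Real.toNNReal p ≤ 1) :
    ∫ b, (if b then (1:ℝ) else 0) ∂((PMF.bernoulli (Real.toNNReal p) h).toMeasure) = p := by
  rw [PMF.integral_eq_sum]
  simp [PMF.bernoulli_apply, Real.coe_toNNReal _ hp0]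

/-- mean of the truncated gaussian part -/
lemma integrable_pdf_mul_id : Integrable (fun x : ℝ => gaussianPDFReal 0 1 x * x) := by
  have h := (integrable_mul_exp_neg_mul_sq (show (0:ℝ) < 1/2 by norm_num)).const_mul
    (Real.sqrt (2*π))⁻¹
  refine h.congr (ae_of_all _ fun x => ?_)
  simp only [pdf_eq]
  ring_nf

lemma integral_trunc_gaussian (k : ℝ) :
    ∫ z, (if k ≤ z then (1:ℝ) else 0) * z ∂(gaussianReal 0 1) = stdphi k := by
  rw [integral_gaussianReal]
  have h1 : (fun x : ℝ => gaussianPDFReal 0 1 x * ((if k ≤ x then (1:ℝ) else 0) * x))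
      = Set.indicator (Ici k) (fun x => gaussianPDFReal 0 1 x * x) := by
    funext x
    rw [Set.indicator_apply]
    by_cases hx : k ≤ x <;> simp [hx, mem_Ici]
  rw [h1, integral_indicator measurableSet_Ici, integral_Ici_eq_integral_Ioi]
  have hderiv : ∀ x ∈ Ici k, HasDerivAt (fun y : ℝ => -((Real.sqrt (2*π))⁻¹ * Real.exp (-y^2/2)))
      (gaussianPDFReal 0 1 x * x) x := by
    intro x _
    have h2 : HasDerivAt (fun y : ℝ => -y^2/2) (-x) x := by
      have := ((hasDerivAt_pow 2 x).neg).div_const 2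
      exact this.congr_deriv (by push_cast; ring)
    have h3 := (h2.exp.const_mul (Real.sqrt (2*π))⁻¹).neg
    exact h3.congr_deriv (by rw [pdf_eq]; ring)
  have hint : IntegrableOn (fun x : ℝ => gaussianPDFReal 0 1 x * x) (Ioi k) :=
    integrable_pdf_mul_id.integrableOn
  have htend : Filter.Tendsto (fun y : ℝ => -((Real.sqrt (2*π))⁻¹ * Real.exp (-y^2/2)))
      Filter.atTop (nhds 0) := by
    rw [show (0:ℝ) = -((Real.sqrt (2*π))⁻¹ * 0) by ring]
    refine (Filter.Tendsto.const_mul _ ?_).neg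
    refine Real.tendsto_exp_atBot.comp ?_
    have h4 : Filter.Tendsto (fun y : ℝ => y^2/2) Filter.atTop Filter.atTop := by
      refine Filter.tendsto_atTop_mono' _ ?_ Filter.tendsto_id
      filter_upwards [Filter.eventually_ge_atTop (2:ℝ)] with y hy
      simp only [id_eq]
      nlinarith
    have h5 := Filter.tendsto_neg_atTop_atBot.comp h4
    refine h5.congr fun y => by simp; ring
  have := integral_Ioi_of_hasDerivAt_of_tendsto' hderiv hint htend
  rw [this]
  unfold stdphi
  ring


section MGF

variable {p k t : ℝ}

def X (k : ℝ) : Bool × ℝ → ℝ := fun ω =>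
  (if ω.1 then (1:ℝ) else 0) * (if k ≤ ω.2 then (1:ℝ) else 0) * ω.2

lemma X_def (k : ℝ) (ω : Bool × ℝ) :
    X k ω = (if ω.1 then (1:ℝ) else 0) * (if k ≤ ω.2 then (1:ℝ) else 0) * ω.2 := rfl

def W : ℝ → ℝ := fun z => z^2 * Real.exp (T * |z|)

lemma W_def (z : ℝ) : W z = z^2 * Real.exp (T * |z|) := rfl

lemma measurable_X (k : ℝ) : Measurable (X k) := by
  have h1 : Measurable (fun ω : Bool × ℝ => if ω.1 then (1:ℝ) else 0) := by
    refine Measurable.ite ?_ measurable_const measurable_const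
    exact measurable_fst (MeasurableSet.singleton true)
  have h2 : Measurable (fun ω : Bool × ℝ => if k ≤ ω.2 then (1:ℝ) else 0) := by
    refine Measurable.ite ?_ measurable_const measurable_const
    exact measurable_snd measurableSet_Ici
  exact (h1.mul h2).mul measurable_snd

lemma measurable_W : Measurable W :=
  ((measurable_id.pow_const 2).mul
    ((Real.measurable_exp.comp (measurable_abs.const_mul T))))

lemma W_integrable : Integrable W (gaussianReal 0 1) := by
  rw [integrable_gaussianReal_iff]
  refine (maj_integrable.const_mul C).mono'
    (((measurable_gaussianPDFReal 0 1).mul measurable_W).aestronglyMeasurable)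
    (ae_of_all _ fun x => ?_)
  rw [Real.norm_eq_abs, abs_of_nonneg (mul_nonneg (gaussianPDFReal_nonneg 0 1 x)
    (by rw [W_def]; positivity))]
  exact ptwise x

lemma trunc_integrable :
    Integrable (fun z : ℝ => (if k ≤ z then (1:ℝ) else 0) * z) (gaussianReal 0 1) := by
  rw [integrable_gaussianReal_iff]
  refine integrable_pdf_mul_id.abs.mono'
    (((measurable_gaussianPDFReal 0 1).mul
      ((Measurable.ite measurableSet_Ici measurable_const measurable_const).mul
        measurable_id)).aestronglyMeasurable)
    (ae_of_all _ fun x => ?_)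
  rw [Real.norm_eq_abs, abs_mul, abs_mul, abs_mul]
  have hc : |if k ≤ x then (1:ℝ) else 0| ≤ 1 := by split <;> simp
  have h0 : (0:ℝ) ≤ |gaussianPDFReal 0 1 x| := abs_nonneg _
  have h1 : (0:ℝ) ≤ |x| := abs_nonneg _
  calc |gaussianPDFReal 0 1 x| * (|if k ≤ x then (1:ℝ) else 0| * |x|)
      ≤ |gaussianPDFReal 0 1 x| * (1 * |x|) := by
        refine mul_le_mul_of_nonneg_left ?_ h0
        exact mul_le_mul_of_nonneg_right hc h1
    _ = |gaussianPDFReal 0 1 x| * |x| := by ring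

variable {h1 : Real.toNNReal p ≤ 1}

lemma X_integrable :
    Integrable (X k) (((PMF.bernoulli (Real.toNNReal p) h1).toMeasure).prod
      (gaussianReal 0 1)) := by
  have hX : X k = fun ω : Bool × ℝ =>
      (if ω.1 then (1:ℝ) else 0) * ((if k ≤ ω.2 then (1:ℝ) else 0) * ω.2) :=
    funext fun ω => mul_assoc _ _ _
  rw [hX]
  exact Integrable.mul_prod
    (Integrable.of_finite (μ := (PMF.bernoulli (Real.toNNReal p) h1).toMeasure)
      (f := fun b : Bool => if b then (1:ℝ) else 0)) trunc_integrable

lemma mean_X (hp0 : 0 ≤ p) :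
    ∫ ω, X k ω ∂(((PMF.bernoulli (Real.toNNReal p) h1).toMeasure).prod
      (gaussianReal 0 1)) = p * stdphi k := by
  have hX : (fun ω : Bool × ℝ => X k ω) = fun ω : Bool × ℝ =>
      (if ω.1 then (1:ℝ) else 0) * ((if k ≤ ω.2 then (1:ℝ) else 0) * ω.2) :=
    funext fun ω => mul_assoc _ _ _
  have hpm := integral_prod_mul (μ := (PMF.bernoulli (Real.toNNReal p) h1).toMeasure)
    (ν := gaussianReal 0 1) (f := fun b : Bool => if b then (1:ℝ) else 0)
    (g := fun y : ℝ => (if k ≤ y then (1:ℝ) else 0) * y)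
  rw [hX, hpm, integral_bernoulli_ite hp0 h1, integral_trunc_gaussian]

lemma W_snd_integrable :
    Integrable (fun ω : Bool × ℝ => W ω.2)
      (((PMF.bernoulli (Real.toNNReal p) h1).toMeasure).prod (gaussianReal 0 1)) := by
  have := Integrable.mul_prod
    (integrable_const (1:ℝ) :
      Integrable (fun _ : Bool => (1:ℝ)) (PMF.bernoulli (Real.toNNReal p) h1).toMeasure)
    W_integrable
  simpa using this

lemma exp_tX_ptwise (ht : |t| ≤ T) (ω : Bool × ℝ) :
    Real.exp (t * X k ω) ≤ 1 + t * X k ω + t^2/2 * W ω.2 := by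
  refine (exp_quad (t * X k ω)).trans ?_
  have key : (t * X k ω)^2 / 2 * Real.exp |t * X k ω| ≤ t^2/2 * W ω.2 := by
    set z := ω.2 with hz
    set c := (if ω.1 then (1:ℝ) else 0) * (if k ≤ z then (1:ℝ) else 0) with hc
    have hX : X k ω = c * z := rfl
    have hc0 : 0 ≤ c := by rw [hc]; split <;> split <;> norm_num
    have hc1 : c ≤ 1 := by rw [hc]; split <;> split <;> norm_num
    have e1 : Real.exp |t * X k ω| ≤ Real.exp (T * |z|) := by
      apply Real.exp_le_exp.mpr
      rw [hX, show t * (c * z) = (t * c) * z by ring, abs_mul, abs_mul]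
      have h2 : |t| * |c| ≤ T := by
        rw [abs_of_nonneg hc0]
        calc |t| * c ≤ T * 1 := mul_le_mul ht hc1 hc0 (le_trans (abs_nonneg t) ht)
          _ = T := mul_one T
      exact mul_le_mul_of_nonneg_right h2 (abs_nonneg z)
    have e2 : (t * X k ω)^2 / 2 ≤ t^2 * z^2 / 2 := by
      rw [hX]
      have hcsq : c^2 ≤ 1 := by nlinarith
      nlinarith [mul_le_mul_of_nonneg_left hcsq (sq_nonneg (t*z))]
    calc (t * X k ω)^2 / 2 * Real.exp |t * X k ω|
        ≤ t^2 * z^2 / 2 * Real.exp (T * |z|) :=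
          mul_le_mul e2 e1 (Real.exp_pos _).le (by positivity)
      _ = t^2/2 * W z := by rw [W_def]; ring
  linarith

lemma rhs_integrable :
    Integrable (fun ω : Bool × ℝ => 1 + t * X k ω + t^2/2 * W ω.2)
      (((PMF.bernoulli (Real.toNNReal p) h1).toMeasure).prod (gaussianReal 0 1)) :=
  ((integrable_const 1).add ((X_integrable (h1 := h1)).const_mul t)).add
    ((W_snd_integrable (h1 := h1)).const_mul _)

lemma integral_W_snd :
    ∫ ω : Bool × ℝ, W ω.2
      ∂(((PMF.bernoulli (Real.toNNReal p) h1).toMeasure).prod (gaussianReal 0 1))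
      ≤ 27/10 := by
  have heq : ∫ ω : Bool × ℝ, W ω.2
      ∂(((PMF.bernoulli (Real.toNNReal p) h1).toMeasure).prod (gaussianReal 0 1))
      = ∫ z, W z ∂(gaussianReal 0 1) := by
    have hpm := integral_prod_mul
      (μ := (PMF.bernoulli (Real.toNNReal p) h1).toMeasure) (ν := gaussianReal 0 1)
      (f := fun _ : Bool => (1:ℝ)) (g := W)
    have hβ : IsProbabilityMeasure (PMF.bernoulli (Real.toNNReal p) h1).toMeasure :=
      PMF.toMeasure.isProbabilityMeasure _
    simp only [one_mul] at hpm
    rw [hpm, integral_const, probReal_univ]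
    simp
  rw [heq, integral_gaussianReal]
  have : ∀ z : ℝ, gaussianPDFReal 0 1 z * W z
      = gaussianPDFReal 0 1 z * (z^2 * Real.exp (T * |z|)) := fun z => rfl
  simp only [this]
  exact gauss_moment

lemma mgf_bound (hp0 : 0 ≤ p) (h1 : Real.toNNReal p ≤ 1) (ht : |t| ≤ T) :
    ∫ ω, Real.exp (t * X k ω)
      ∂(((PMF.bernoulli (Real.toNNReal p) h1).toMeasure).prod (gaussianReal 0 1))
      ≤ Real.exp (t * (p * stdphi k) + (27/20) * t^2) := by
  set ν := ((PMF.bernoulli (Real.toNNReal p) h1).toMeasure).prod (gaussianReal 0 1)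
  have hle := integral_mono_of_nonneg
    (ae_of_all _ fun ω => (Real.exp_pos (t * X k ω)).le)
    (rhs_integrable (h1 := h1)) (ae_of_all _ (exp_tX_ptwise ht))
  refine hle.trans ?_
  have hadd1 := integral_add (μ := ν) (f := fun ω => 1 + t * X k ω)
    (g := fun ω => t^2/2 * W ω.2)
    ((integrable_const 1).add ((X_integrable (h1 := h1)).const_mul t))
    ((W_snd_integrable (h1 := h1)).const_mul _)
  have hadd2 := integral_add (μ := ν) (f := fun _ => (1:ℝ))
    (g := fun ω => t * X k ω) (integrable_const 1)
    ((X_integrable (h1 := h1)).const_mul t)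
  have hprob : IsProbabilityMeasure ν := by
    have : IsProbabilityMeasure (PMF.bernoulli (Real.toNNReal p) h1).toMeasure :=
      PMF.toMeasure.isProbabilityMeasure _
    infer_instance
  rw [hadd1, hadd2, integral_const, integral_const_mul, integral_const_mul, mean_X hp0]
  simp only [probReal_univ, ENNReal.toReal_one, smul_eq_mul, one_mul]
  have hW := integral_W_snd (h1 := h1)
  have h2 : t^2/2 * (∫ ω : Bool × ℝ, W ω.2 ∂ν) ≤ (27/20) * t^2 := by
    have := mul_le_mul_of_nonneg_left hW (by positivity : (0:ℝ) ≤ t^2/2)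
    linarith
  have := Real.add_one_le_exp (t * (p * stdphi k) + (27/20) * t^2)
  linarith

lemma exp_tX_integrable (h1 : Real.toNNReal p ≤ 1) (ht : |t| ≤ T) :
    Integrable (fun ω => Real.exp (t * X k ω))
      (((PMF.bernoulli (Real.toNNReal p) h1).toMeasure).prod (gaussianReal 0 1)) := by
  refine (rhs_integrable (k := k) (t := t) (h1 := h1)).mono'
    ((((measurable_X k).const_mul t).exp).aestronglyMeasurable)
    (ae_of_all _ fun ω => ?_)
  rw [Real.norm_eq_abs, abs_of_pos (Real.exp_pos _)]
  exact exp_tX_ptwise ht ω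

end MGF

lemma pi_tail (n : ℕ) (p k s a : ℝ) (hp0 : 0 ≤ p) (h1 : Real.toNNReal p ≤ 1)
    (hs : |s| ≤ T) :
    ((Measure.pi fun _ : Fin n =>
        ((PMF.bernoulli (Real.toNNReal p) h1).toMeasure).prod (gaussianReal 0 1))
      {ω | Real.exp (s * a) ≤ Real.exp (s * ∑ i, X k (ω i))}).toReal
      ≤ Real.exp ((n:ℝ) * (s * (p * stdphi k) + (27/20) * s^2) - s * a) := by
  set ν := ((PMF.bernoulli (Real.toNNReal p) h1).toMeasure).prod (gaussianReal 0 1) with hν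
  letI : MeasureSpace (Bool × ℝ) := ⟨ν⟩
  haveI hβprob : IsProbabilityMeasure (PMF.bernoulli (Real.toNNReal p) h1).toMeasure :=
    PMF.toMeasure.isProbabilityMeasure _
  haveI hνprob : IsProbabilityMeasure ν := by rw [hν]; infer_instance
  haveI : SigmaFinite (volume : Measure (Bool × ℝ)) := by
    show SigmaFinite ν; infer_instance
  -- the pi measure is the volume of the pi measure space
  have hvol : (Measure.pi fun _ : Fin n => ν) = (volume : Measure (Fin n → Bool × ℝ)) :=
    rfl
  -- rewrite integrand as a product
  have hexpand : ∀ ω : Fin n → Bool × ℝ,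
      Real.exp (s * ∑ i, X k (ω i)) = ∏ i : Fin n, Real.exp (s * X k (ω i)) := by
    intro ω
    rw [Finset.mul_sum, Real.exp_sum]
  have hint : Integrable (fun ω : Fin n → Bool × ℝ => Real.exp (s * ∑ i, X k (ω i)))
      (Measure.pi fun _ : Fin n => ν) := by
    rw [hvol]
    have h := Integrable.fintype_prod (E := Bool × ℝ) (ι := Fin n)
      (f := fun _ x => Real.exp (s * X k x))
      (fun _ => exp_tX_integrable (h1 := h1) hs)
    refine h.congr (ae_of_all _ fun ω => ?_)
    exact (hexpand ω).symm
  have hprod : ∫ ω : Fin n → Bool × ℝ, Real.exp (s * ∑ i, X k (ω i))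
      ∂(Measure.pi fun _ : Fin n => ν)
      = (∫ x : Bool × ℝ, Real.exp (s * X k x) ∂ν) ^ n := by
    rw [hvol, show ν = (volume : Measure (Bool × ℝ)) from rfl]
    have h := integral_fintype_prod_volume_eq_pow (E := Bool × ℝ) (ι := Fin n)
      (f := fun x => Real.exp (s * X k x))
    simp only [Fintype.card_fin] at h
    rw [← h]
    congr 1
    funext ω
    exact hexpand ω
  have hmarkov := mul_meas_ge_le_integral_of_nonneg
    (μ := Measure.pi fun _ : Fin n => ν)
    (f := fun ω => Real.exp (s * ∑ i, X k (ω i)))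
    (ae_of_all _ fun ω => (Real.exp_pos _).le) hint (Real.exp (s * a))
  rw [hprod] at hmarkov
  have hmgf : (∫ x : Bool × ℝ, Real.exp (s * X k x) ∂ν) ^ n
      ≤ Real.exp ((n:ℝ) * (s * (p * stdphi k) + (27/20) * s^2)) := by
    rw [Real.exp_nat_mul]
    exact pow_le_pow_left₀ (integral_nonneg fun x => (Real.exp_pos _).le)
      (mgf_bound hp0 h1 hs) n
  have hεpos : (0:ℝ) < Real.exp (s * a) := Real.exp_pos _
  calc ((Measure.pi fun _ : Fin n => ν)
        {ω | Real.exp (s * a) ≤ Real.exp (s * ∑ i, X k (ω i))}).toReal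
      = Real.exp (-(s*a)) * (Real.exp (s * a) * ((Measure.pi fun _ : Fin n => ν)
        {ω | Real.exp (s * a) ≤ Real.exp (s * ∑ i, X k (ω i))}).toReal) := by
        rw [← mul_assoc, ← Real.exp_add]; simp
    _ ≤ Real.exp (-(s*a)) * Real.exp ((n:ℝ) * (s * (p * stdphi k) + (27/20) * s^2)) :=
        mul_le_mul_of_nonneg_left (hmarkov.trans hmgf) (Real.exp_pos _).le
    _ = Real.exp ((n:ℝ) * (s * (p * stdphi k) + (27/20) * s^2) - s * a) := by
        rw [← Real.exp_add]; congr 1; ring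

end BTGC

set_option maxHeartbeats 1000000 in
open BTGC in
/-- for i.i.d. pairs `(b i, Z i)` with `b i ~ Bernoulli(p)` and `Z i ~ N(0,1)`
independent, and `X̄ = (1/n) Σ b i · 1{Z i ≥ k} · Z i`, we have
`P(|X̄ - p φ(k)| ≤ √(2/n) · log n) ≥ 1 - 4/n`. -/
theorem bernoulli_truncated_gaussian_concentration (n : ℕ) (hn : 2 ≤ n) (p : ℝ)
    (hp0 : 0 ≤ p) (hp1 : p ≤ 1) (k : ℝ) :
    ENNReal.ofReal (1 - 4 / n) ≤
      (Measure.pi fun _ : Fin n =>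
          ((PMF.bernoulli (Real.toNNReal p) (Real.toNNReal_le_one.mpr hp1)).toMeasure).prod
            (gaussianReal 0 1))
        {ω | |(1 / n : ℝ) * ∑ i, (if (ω i).1 then (1 : ℝ) else 0) *
              (if k ≤ (ω i).2 then (1 : ℝ) else 0) * (ω i).2 - p * stdphi k|
            ≤ Real.sqrt (2 / n) * Real.log n} := by
  have h1 : Real.toNNReal p ≤ 1 := Real.toNNReal_le_one.mpr hp1
  set μ := Measure.pi fun _ : Fin n =>
      ((PMF.bernoulli (Real.toNNReal p) (Real.toNNReal_le_one.mpr hp1)).toMeasure).prod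
        (gaussianReal 0 1) with hμ
  -- basic facts
  have hn1 : (1:ℝ) < (n:ℝ) := by exact_mod_cast lt_of_lt_of_le one_lt_two hn
  have hnpos : (0:ℝ) < (n:ℝ) := lt_trans one_pos hn1
  have hLpos : 0 < Real.log n := Real.log_pos hn1
  set L := Real.log (n:ℝ) with hLdef
  set ε := Real.sqrt (2 / (n:ℝ)) * L with hεdef
  have hsq : Real.sqrt (2/(n:ℝ)) ^ 2 = 2/(n:ℝ) := Real.sq_sqrt (by positivity)
  have hεpos : 0 < ε := mul_pos (Real.sqrt_pos.mpr (by positivity)) hLpos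
  have hε2 : ε ^ 2 = 2/(n:ℝ) * L^2 := by rw [hεdef, mul_pow, hsq]
  -- ε ≤ √2
  have hlogle : L ≤ Real.sqrt n := by
    have hsn : 0 < Real.sqrt (n:ℝ) := Real.sqrt_pos.mpr hnpos
    have h2 : L = 2 * Real.log (Real.sqrt n) := by
      rw [hLdef, Real.log_sqrt (le_of_lt hnpos)]; ring
    have h3 : Real.log (Real.sqrt n) ≤ Real.sqrt n / Real.exp 1 := by
      have h4 := Real.add_one_le_exp (Real.log (Real.sqrt n) - 1)
      rw [Real.exp_sub, Real.exp_log hsn] at h4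
      calc Real.log (Real.sqrt n) = Real.log (Real.sqrt n) - 1 + 1 := by ring
        _ ≤ Real.sqrt n / Real.exp 1 := h4
    have he : (2:ℝ) ≤ Real.exp 1 := by
      have := Real.add_one_le_exp (1:ℝ); linarith
    have hepos : (0:ℝ) < Real.exp 1 := Real.exp_pos 1
    have hlsn : 0 ≤ Real.log (Real.sqrt n) := by
      apply Real.log_nonneg
      rw [show (1:ℝ) = Real.sqrt 1 by simp]
      exact Real.sqrt_le_sqrt (by linarith)
    rw [h2]
    rw [le_div_iff₀ hepos] at h3
    nlinarith [mul_nonneg (sub_nonneg.mpr he) hlsn]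
  have hεle : ε ≤ Real.sqrt 2 := by
    have hstep : ε ≤ Real.sqrt (2/(n:ℝ)) * Real.sqrt n := by
      rw [hεdef]
      exact mul_le_mul_of_nonneg_left hlogle (Real.sqrt_nonneg _)
    have : Real.sqrt (2/(n:ℝ)) * Real.sqrt n = Real.sqrt 2 := by
      rw [← Real.sqrt_mul (by positivity) (n:ℝ)]
      congr 1
      field_simp
    linarith [hstep, this.le, this.ge]
  set t := (10/27) * ε with htdef
  have htpos : 0 < t := by rw [htdef]; positivity
  have habs : |t| ≤ T := by
    rw [abs_of_pos htpos, htdef, T]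
    nlinarith
  have habs' : |(-t)| ≤ T := by rwa [abs_neg]
  -- exponent identities
  have hnε : (n:ℝ) * ε^2 = 2 * L^2 := by rw [hε2]; field_simp
  have hidA : (n:ℝ) * (t * (p * stdphi k) + (27/20) * t^2)
      - t * ((n:ℝ) * (p * stdphi k + ε)) = -(10/27) * L^2 := by
    have : (n:ℝ) * (t * (p * stdphi k) + (27/20) * t^2)
        - t * ((n:ℝ) * (p * stdphi k + ε)) = -(5/27) * ((n:ℝ) * ε^2) := by
      rw [htdef]; ring
    rw [this, hnε]; ring
  have hidB : (n:ℝ) * ((-t) * (p * stdphi k) + (27/20) * (-t)^2)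
      - (-t) * ((n:ℝ) * (p * stdphi k - ε)) = -(10/27) * L^2 := by
    have : (n:ℝ) * ((-t) * (p * stdphi k) + (27/20) * (-t)^2)
        - (-t) * ((n:ℝ) * (p * stdphi k - ε)) = -(5/27) * ((n:ℝ) * ε^2) := by
      rw [htdef]; ring
    rw [this, hnε]; ring
  set q := Real.exp (-(10/27) * L^2) with hqdef
  have hqpos : 0 < q := Real.exp_pos _
  -- tail bounds
  have hA := pi_tail n p k t ((n:ℝ) * (p * stdphi k + ε)) hp0
    (Real.toNNReal_le_one.mpr hp1) habs
  have hB := pi_tail n p k (-t) ((n:ℝ) * (p * stdphi k - ε)) hp0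
    (Real.toNNReal_le_one.mpr hp1) habs'
  have hA' : (μ {ω | Real.exp (t * ((n:ℝ) * (p * stdphi k + ε)))
      ≤ Real.exp (t * ∑ i, X k (ω i))}).toReal ≤ q :=
    hA.trans (le_of_eq (congrArg Real.exp hidA))
  have hB' : (μ {ω | Real.exp ((-t) * ((n:ℝ) * (p * stdphi k - ε)))
      ≤ Real.exp ((-t) * ∑ i, X k (ω i))}).toReal ≤ q :=
    hB.trans (le_of_eq (congrArg Real.exp hidB))
  -- probability measure instances
  haveI hβprob : IsProbabilityMeasure
      (PMF.bernoulli (Real.toNNReal p) (Real.toNNReal_le_one.mpr hp1)).toMeasure :=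
    PMF.toMeasure.isProbabilityMeasure _
  haveI hμprob : IsProbabilityMeasure μ := by rw [hμ]; infer_instance
  have hAenn : μ {ω | Real.exp (t * ((n:ℝ) * (p * stdphi k + ε)))
      ≤ Real.exp (t * ∑ i, X k (ω i))} ≤ ENNReal.ofReal q := by
    rw [← ENNReal.ofReal_toReal (measure_ne_top μ _)]
    exact ENNReal.ofReal_le_ofReal hA'
  have hBenn : μ {ω | Real.exp ((-t) * ((n:ℝ) * (p * stdphi k - ε)))
      ≤ Real.exp ((-t) * ∑ i, X k (ω i))} ≤ ENNReal.ofReal q := by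
    rw [← ENNReal.ofReal_toReal (measure_ne_top μ _)]
    exact ENNReal.ofReal_le_ofReal hB'
  -- identify the event with the X-form
  show ENNReal.ofReal (1 - 4 / n) ≤
    μ {ω : Fin n → Bool × ℝ | |(1 / (n:ℝ)) * ∑ i, X k (ω i) - p * stdphi k| ≤ ε}
  -- complement inclusion
  have hsub : {ω : Fin n → Bool × ℝ | |(1 / (n:ℝ)) * ∑ i, X k (ω i) - p * stdphi k| ≤ ε}ᶜ
      ⊆ {ω | Real.exp (t * ((n:ℝ) * (p * stdphi k + ε)))
            ≤ Real.exp (t * ∑ i, X k (ω i))}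
        ∪ {ω | Real.exp ((-t) * ((n:ℝ) * (p * stdphi k - ε)))
            ≤ Real.exp ((-t) * ∑ i, X k (ω i))} := by
    intro ω hω
    simp only [Set.mem_compl_iff, Set.mem_setOf_eq, not_le] at hω
    rcases lt_abs.mp hω with hcase | hcase
    · left
      simp only [Set.mem_setOf_eq]
      apply Real.exp_le_exp.mpr
      apply mul_le_mul_of_nonneg_left _ htpos.le
      have h5 : p * stdphi k + ε < (1/(n:ℝ)) * ∑ i, X k (ω i) := by linarith
      have h6 : (1/(n:ℝ)) * ∑ i, X k (ω i) = (∑ i, X k (ω i)) / (n:ℝ) := by ring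
      rw [h6] at h5
      linarith [(lt_div_iff₀ hnpos).mp h5]
    · right
      simp only [Set.mem_setOf_eq]
      apply Real.exp_le_exp.mpr
      have h5 : (1/(n:ℝ)) * ∑ i, X k (ω i) < p * stdphi k - ε := by linarith
      have h6 : (1/(n:ℝ)) * ∑ i, X k (ω i) = (∑ i, X k (ω i)) / (n:ℝ) := by ring
      rw [h6] at h5
      have h7 : ∑ i, X k (ω i) < (n:ℝ) * (p * stdphi k - ε) := by
        have := (div_lt_iff₀ hnpos).mp h5
        linarith
      linarith [mul_le_mul_of_nonneg_left h7.le htpos.le]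
  -- measurability of the event
  have hSmeas : Measurable (fun ω : Fin n → Bool × ℝ => ∑ i, X k (ω i)) :=
    Finset.measurable_sum _ (fun i _ => (measurable_X k).comp (measurable_pi_apply i))
  have hEmeas : MeasurableSet
      {ω : Fin n → Bool × ℝ | |(1 / (n:ℝ)) * ∑ i, X k (ω i) - p * stdphi k| ≤ ε} := by
    refine measurableSet_le ?_ measurable_const
    exact ((hSmeas.const_mul (1/(n:ℝ))).sub measurable_const).abs
  -- complement bound
  have hcompl : μ {ω : Fin n → Bool × ℝ |
      |(1 / (n:ℝ)) * ∑ i, X k (ω i) - p * stdphi k| ≤ ε}ᶜ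
      ≤ ENNReal.ofReal (4 / n) := by
    refine (measure_mono hsub).trans ?_
    refine (measure_union_le _ _).trans ?_
    refine (add_le_add hAenn hBenn).trans ?_
    rw [← ENNReal.ofReal_add hqpos.le hqpos.le]
    apply ENNReal.ofReal_le_ofReal
    have hqle : q ≤ 2 / (n:ℝ) := by
      have h2n : (2:ℝ) / (n:ℝ) = Real.exp (Real.log 2 - L) := by
        rw [Real.exp_sub, Real.exp_log (by norm_num : (0:ℝ) < 2), hLdef, Real.exp_log hnpos]
      rw [h2n, hqdef]
      apply Real.exp_le_exp.mpr
      nlinarith [Real.log_two_gt_d9, sq_nonneg (L - 27/20)]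
    calc q + q ≤ 2/(n:ℝ) + 2/(n:ℝ) := add_le_add hqle hqle
      _ = 4/(n:ℝ) := by ring
  -- conclude
  calc ENNReal.ofReal (1 - 4 / n)
      = 1 - ENNReal.ofReal (4 / n) := by
        rw [ENNReal.ofReal_sub _ (by positivity), ENNReal.ofReal_one]
    _ ≤ 1 - μ {ω : Fin n → Bool × ℝ |
          |(1 / (n:ℝ)) * ∑ i, X k (ω i) - p * stdphi k| ≤ ε}ᶜ :=
        tsub_le_tsub_left hcompl 1
    _ = μ {ω : Fin n → Bool × ℝ |
          |(1 / (n:ℝ)) * ∑ i, X k (ω i) - p * stdphi k| ≤ ε} := by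
        rw [← prob_compl_eq_one_sub hEmeas.compl, compl_compl]

end
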